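/- arXiv:1901.01254 — 2 statements merged into one kernel-verified Lean document; each statement's English description precedes it below -/
import Mathlib

section
/- For every positive integer M and every family of real targets a_{m,p} (m = 1,...,M, p = 0,1,2), there exists a C²-function W on [0,h] with W(0) = W(h) = W'(0) = W'(h) = 0 such that ∫_0^h y^p exp(-m y) W(y) dy = a_{m,p} for all m and p. -/
open Real intervalIntegral

set_option maxHeartbeats 1000000

namespace MomentAux

open Real Filter Set MeasureTheory

/-- A quadratic polynomial tending to 0 at infinity is zero. -/
lemma poly3_zero (c : Fin 3 → ℝ)
    (H : Tendsto (fun y : ℝ => ∑ p : Fin 3, c p * y ^ (p : ℕ)) atTop (nhds 0)) :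
    c = 0 := by
  have key : ∀ d0 d1 d2 : ℝ,
      Tendsto (fun y : ℝ => d0 + d1 * y + d2 * y ^ 2) atTop (nhds 0) →
      d0 = 0 ∧ d1 = 0 ∧ d2 = 0 := by
    intro d0 d1 d2 hT
    have l2 : Tendsto (fun y : ℝ => (d0 + d1 * y + d2 * y ^ 2) / y ^ 2) atTop (nhds 0) :=
      hT.div_atTop (tendsto_pow_atTop (by norm_num))
    have e2 : Tendsto (fun y : ℝ => (d0 + d1 * y + d2 * y ^ 2) / y ^ 2) atTop (nhds d2) := by
      have t0 : Tendsto (fun y : ℝ => d0 / y ^ 2) atTop (nhds 0) :=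
        tendsto_const_nhds.div_atTop (tendsto_pow_atTop (by norm_num))
      have t1 : Tendsto (fun y : ℝ => d1 / y) atTop (nhds 0) :=
        tendsto_const_nhds.div_atTop tendsto_id
      have t2 : Tendsto (fun _ : ℝ => d2) atTop (nhds d2) := tendsto_const_nhds
      have t3 := (t0.add t1).add t2
      rw [zero_add, zero_add] at t3
      refine t3.congr' ?_
      filter_upwards [eventually_gt_atTop (0:ℝ)] with y hy
      field_simp
    have hd2 : d2 = 0 := by
      have := tendsto_nhds_unique e2 l2
      linarith
    subst hd2
    have l1 : Tendsto (fun y : ℝ => (d0 + d1 * y + 0 * y ^ 2) / y) atTop (nhds 0) :=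
      hT.div_atTop tendsto_id
    have e1 : Tendsto (fun y : ℝ => (d0 + d1 * y + 0 * y ^ 2) / y) atTop (nhds d1) := by
      have t0 : Tendsto (fun y : ℝ => d0 / y) atTop (nhds 0) :=
        tendsto_const_nhds.div_atTop tendsto_id
      have t1 : Tendsto (fun _ : ℝ => d1) atTop (nhds d1) := tendsto_const_nhds
      have t3 := t0.add t1
      rw [zero_add] at t3
      refine t3.congr' ?_
      filter_upwards [eventually_gt_atTop (0:ℝ)] with y hy
      field_simp
      ring
    have hd1 : d1 = 0 := by
      have := tendsto_nhds_unique e1 l1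
      linarith
    subst hd1
    have e0 : Tendsto (fun y : ℝ => d0 + 0 * y + 0 * y ^ 2) atTop (nhds d0) := by
      have t1 : Tendsto (fun _ : ℝ => d0) atTop (nhds d0) := tendsto_const_nhds
      refine t1.congr fun y => by ring
    have hd0 : d0 = 0 := tendsto_nhds_unique e0 hT
    exact ⟨hd0, rfl, rfl⟩
  have H' : Tendsto (fun y : ℝ => c 0 + c 1 * y + c 2 * y ^ 2) atTop (nhds 0) := by
    refine H.congr fun y => ?_
    simp [Fin.sum_univ_three]
  obtain ⟨h0, h1, h2⟩ := key _ _ _ H'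
  funext p
  fin_cases p <;> simpa [*]

/-- `y^p e^{-(m+1)y} → 0`. -/
lemma tail_tendsto (p : ℕ) (m : ℕ) :
    Tendsto (fun y : ℝ => y ^ p * Real.exp (-((m : ℝ) + 1) * y)) atTop (nhds 0) := by
  refine squeeze_zero' ?_ ?_ (tendsto_pow_mul_exp_neg_atTop_nhds_zero p)
  · filter_upwards [eventually_ge_atTop (0:ℝ)] with y hy
    positivity
  · filter_upwards [eventually_ge_atTop (0:ℝ)] with y hy
    have hle : Real.exp (-((m : ℝ) + 1) * y) ≤ Real.exp (-y) := by
      apply Real.exp_le_exp.mpr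
      nlinarith [Nat.cast_nonneg (α := ℝ) m]
    have hyp : (0:ℝ) ≤ y ^ p := by positivity
    exact mul_le_mul_of_nonneg_left hle hyp

/-- Linear independence of `y^p e^{-(r+m)y}` as functions on ℝ. -/
lemma key : ∀ (n : ℕ) (r : ℝ) (q : ℕ → Fin 3 → ℝ),
    (∀ y : ℝ, (∑ m ∈ Finset.range n, ∑ p : Fin 3,
        q m p * y ^ (p : ℕ) * Real.exp (-(r + m) * y)) = 0) →
    ∀ m < n, q m = 0 := by
  intro n
  induction n with
  | zero => exact fun r q _ m hm => absurd hm (Nat.not_lt_zero m)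
  | succ n IH =>
    intro r q hq
    have hq' : ∀ y : ℝ, (∑ m ∈ Finset.range (n+1), ∑ p : Fin 3,
        q m p * y ^ (p : ℕ) * Real.exp (-(m : ℝ) * y)) = 0 := by
      intro y
      have h1 := hq y
      have h2 : (∑ m ∈ Finset.range (n+1), ∑ p : Fin 3,
            q m p * y ^ (p : ℕ) * Real.exp (-(r + m) * y))
          = Real.exp (-r * y) * ∑ m ∈ Finset.range (n+1), ∑ p : Fin 3,
            q m p * y ^ (p : ℕ) * Real.exp (-(m : ℝ) * y) := by
        rw [Finset.mul_sum]
        refine Finset.sum_congr rfl fun m _ => ?_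
        rw [Finset.mul_sum]
        refine Finset.sum_congr rfl fun p _ => ?_
        rw [show -(r + (m : ℝ)) * y = -r * y + -(m : ℝ) * y by ring, Real.exp_add]
        ring
      rw [h2] at h1
      rcases mul_eq_zero.mp h1 with h | h
      · exact absurd h (Real.exp_ne_zero _)
      · exact h
    have hsplit : ∀ y : ℝ, (∑ p : Fin 3, q 0 p * y ^ (p : ℕ))
        = -∑ m ∈ Finset.range n, ∑ p : Fin 3,
            q (m+1) p * y ^ (p : ℕ) * Real.exp (-((m : ℝ) + 1) * y) := by
      intro y
      have h1 := hq' y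
      rw [Finset.sum_range_succ'] at h1
      simp only [Nat.cast_add, Nat.cast_one, Nat.cast_zero, neg_zero, zero_mul,
        Real.exp_zero, mul_one] at h1
      exact eq_neg_of_add_eq_zero_right h1
    have htail : Tendsto (fun y : ℝ => -∑ m ∈ Finset.range n, ∑ p : Fin 3,
        q (m+1) p * y ^ (p : ℕ) * Real.exp (-((m : ℝ) + 1) * y)) atTop (nhds 0) := by
      have hterm : ∀ (m : ℕ) (p : Fin 3), Tendsto (fun y : ℝ =>
          q (m+1) p * y ^ (p : ℕ) * Real.exp (-((m : ℝ) + 1) * y)) atTop (nhds 0) := by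
        intro m p
        have := (tail_tendsto (p : ℕ) m).const_mul (q (m+1) p)
        rw [mul_zero] at this
        exact this.congr fun y => by ring
      have hs : Tendsto (fun y : ℝ => ∑ m ∈ Finset.range n, ∑ p : Fin 3,
          q (m+1) p * y ^ (p : ℕ) * Real.exp (-((m : ℝ) + 1) * y)) atTop (nhds 0) := by
        have := tendsto_finset_sum (Finset.range n)
          (fun m (_ : m ∈ Finset.range n) => tendsto_finset_sum (Finset.univ : Finset (Fin 3))
            (fun p (_ : p ∈ Finset.univ) => hterm m p))
        simpa using this
      simpa using hs.neg
    have hq0 : q 0 = 0 := poly3_zero _ (htail.congr fun y => (hsplit y).symm)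
    have hq'' : ∀ y : ℝ, (∑ m ∈ Finset.range n, ∑ p : Fin 3,
        (fun m => q (m+1)) m p * y ^ (p : ℕ) * Real.exp (-((1 : ℝ) + m) * y)) = 0 := by
      intro y
      have h1 := hsplit y
      have h2 : (∑ p : Fin 3, q 0 p * y ^ (p : ℕ)) = 0 := by simp [hq0]
      rw [h2] at h1
      have h3 : (∑ m ∈ Finset.range n, ∑ p : Fin 3,
          q (m+1) p * y ^ (p : ℕ) * Real.exp (-((m : ℝ) + 1) * y)) = 0 := by
        linarith [h1]
      calc (∑ m ∈ Finset.range n, ∑ p : Fin 3,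
            q (m+1) p * y ^ (p : ℕ) * Real.exp (-((1 : ℝ) + m) * y))
          = ∑ m ∈ Finset.range n, ∑ p : Fin 3,
            q (m+1) p * y ^ (p : ℕ) * Real.exp (-((m : ℝ) + 1) * y) := by
            refine Finset.sum_congr rfl fun m _ => Finset.sum_congr rfl fun p _ => ?_
            rw [show -((1 : ℝ) + m) = -((m : ℝ) + 1) by ring]
        _ = 0 := h3
    have hrec := IH 1 (fun m => q (m+1)) hq''
    intro m hm
    cases m with
    | zero => exact hq0
    | succ m => exact hrec m (by omega)

/-- The kernels `y^p e^{-(m+1)y}` are linearly independent on `(0,h)`. -/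
lemma indep (h : ℝ) (hh : 0 < h) (M : ℕ) (c : Fin M × Fin 3 → ℝ)
    (H : ∀ y ∈ Set.Ioo (0:ℝ) h, (∑ i : Fin M × Fin 3,
        c i * (y ^ (i.2 : ℕ) * Real.exp (-(((i.1 : ℕ) : ℝ) + 1) * y))) = 0) :
    c = 0 := by
  set F : ℝ → ℝ := fun y => ∑ i : Fin M × Fin 3,
      c i * (y ^ (i.2 : ℕ) * Real.exp (-(((i.1 : ℕ) : ℝ) + 1) * y)) with hF
  have hFa : AnalyticOnNhd ℝ F univ := by
    apply Finset.analyticOnNhd_fun_sum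
    intro i _
    apply analyticOnNhd_const.mul
    apply AnalyticOnNhd.mul
    · exact analyticOnNhd_id.pow _
    · exact (analyticOnNhd_const.mul analyticOnNhd_id).rexp
  have hzero : EqOn F 0 univ := by
    apply hFa.eqOn_zero_of_preconnected_of_mem_closure isPreconnected_univ (mem_univ (h/2))
    have hsub : Ioo (h/2) h ⊆ {z | F z = 0} \ {h/2} := by
      intro y hy
      refine ⟨H y ⟨lt_trans (half_pos hh) hy.1, hy.2⟩, ?_⟩
      exact ne_of_gt hy.1
    refine closure_mono hsub ?_
    rw [closure_Ioo (ne_of_lt (half_lt_self hh))]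
    exact ⟨le_refl _, (half_lt_self hh).le⟩
  -- transfer to ℕ-indexed sums
  set q : ℕ → Fin 3 → ℝ := fun m p => if hm : m < M then c (⟨m, hm⟩, p) else 0 with hqdef
  have hq : ∀ y : ℝ, (∑ m ∈ Finset.range M, ∑ p : Fin 3,
      q m p * y ^ (p : ℕ) * Real.exp (-((1:ℝ) + m) * y)) = 0 := by
    intro y
    have h0 : (∑ i : Fin M × Fin 3,
        c i * (y ^ (i.2 : ℕ) * Real.exp (-(((i.1 : ℕ) : ℝ) + 1) * y))) = 0 :=
      hzero (mem_univ y)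
    rw [Fintype.sum_prod_type] at h0
    rw [← h0]
    rw [← Fin.sum_univ_eq_sum_range (fun m => ∑ p : Fin 3,
      q m p * y ^ (p : ℕ) * Real.exp (-((1:ℝ) + m) * y)) M]
    refine Finset.sum_congr rfl fun m _ => Finset.sum_congr rfl fun p _ => ?_
    rw [hqdef]
    simp only [Fin.is_lt, dif_pos, Fin.eta]
    rw [show -((1:ℝ) + ((m : ℕ) : ℝ)) = -(((m : ℕ) : ℝ) + 1) by ring]
    ring
  have hkey := key M 1 q hq
  funext i
  obtain ⟨m, p⟩ := i
  have h1 : q (m : ℕ) = 0 := hkey (m : ℕ) m.isLt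
  have h2 : q (m : ℕ) p = c (m, p) := by
    rw [hqdef]
    simp only [Fin.is_lt, dif_pos, Fin.eta]
  rw [← h2, h1]
  rfl

lemma main_aux (h : ℝ) (hh : 0 < h) (M : ℕ) (hM : 0 < M)
    (a : Fin M → Fin 3 → ℝ) :
    ∃ W : ℝ → ℝ, ContDiff ℝ 2 W ∧
      W 0 = 0 ∧ W h = 0 ∧ deriv W 0 = 0 ∧ deriv W h = 0 ∧
      ∀ m : Fin M, ∀ p : Fin 3,
        (∫ y in (0:ℝ)..h, y ^ (p : ℕ) * Real.exp (-((m : ℕ) + 1) * y) * W y)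
          = a m p := by
  classical
  set k : Fin M × Fin 3 → ℝ → ℝ :=
    fun i y => y ^ (i.2 : ℕ) * Real.exp (-(((i.1 : ℕ) : ℝ) + 1) * y) with hkdef
  set φ : ℝ → ℝ := fun y => (y * (h - y)) ^ 2 with hφdef
  set g : (Fin M × Fin 3 → ℝ) → ℝ → ℝ :=
    fun c y => ∑ i : Fin M × Fin 3, c i * k i y with hgdef
  have hkc : ∀ i, Continuous (k i) := by
    intro i
    exact (continuous_pow _).mul (Real.continuous_exp.comp (continuous_const.mul continuous_id))
  have hφc : Continuous φ := by
    exact ((continuous_id.mul (continuous_const.sub continuous_id)).pow 2)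
  have hgcont : ∀ c, Continuous (g c) := by
    intro c
    exact continuous_finset_sum _ fun i _ => continuous_const.mul (hkc i)
  set B : Matrix (Fin M × Fin 3) (Fin M × Fin 3) ℝ :=
    fun j i => ∫ y in (0:ℝ)..h, k j y * (φ y * k i y) with hBdef
  have hmul : ∀ c j, B.mulVec c j = ∫ y in (0:ℝ)..h, k j y * (φ y * g c y) := by
    intro c j
    have step1 : B.mulVec c j
        = ∑ i : Fin M × Fin 3, ∫ y in (0:ℝ)..h, k j y * (φ y * k i y) * c i := by
      simp only [Matrix.mulVec, dotProduct, hBdef]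
      exact Finset.sum_congr rfl fun i _ => (intervalIntegral.integral_mul_const (c i) _).symm
    rw [step1, ← intervalIntegral.integral_finset_sum]
    · refine intervalIntegral.integral_congr fun y _ => ?_
      rw [hgdef]
      simp only
      rw [Finset.mul_sum, Finset.mul_sum]
      exact Finset.sum_congr rfl fun i _ => by ring
    · intro i _
      exact (((hkc j).mul (hφc.mul (hkc i))).mul continuous_const).intervalIntegrable 0 h
  have hc0 : ∀ c, B.mulVec c = 0 → c = 0 := by
    intro c hc
    have hzero : (∫ y in (0:ℝ)..h, φ y * (g c y) ^ 2) = 0 := by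
      have h1 : ∑ j : Fin M × Fin 3, c j * B.mulVec c j = 0 := by
        rw [hc]; simp
      have h2 : ∑ j : Fin M × Fin 3, c j * B.mulVec c j
          = ∫ y in (0:ℝ)..h, φ y * (g c y) ^ 2 := by
        have e1 : ∀ j, c j * B.mulVec c j
            = ∫ y in (0:ℝ)..h, c j * (k j y * (φ y * g c y)) := by
          intro j
          rw [hmul c j, intervalIntegral.integral_const_mul]
        rw [Finset.sum_congr rfl fun j _ => e1 j, ← intervalIntegral.integral_finset_sum]
        · refine intervalIntegral.integral_congr fun y _ => ?_
          have : (∑ j : Fin M × Fin 3, c j * (k j y * (φ y * g c y)))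
              = (∑ j : Fin M × Fin 3, c j * k j y) * (φ y * g c y) := by
            rw [Finset.sum_mul]
            exact Finset.sum_congr rfl fun j _ => by ring
          rw [this]
          have hgy : (∑ j : Fin M × Fin 3, c j * k j y) = g c y := by rw [hgdef]
          rw [hgy]; ring
        · intro j _
          exact (continuous_const.mul ((hkc j).mul (hφc.mul (hgcont c)))).intervalIntegrable 0 h
      rw [← h2, h1]
    have hwnn : (0 : ℝ → ℝ) ≤ᵐ[volume.restrict (Ioc 0 h)] fun y => φ y * (g c y) ^ 2 := by
      refine Eventually.of_forall fun y => ?_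
      have hφnn : 0 ≤ φ y := by rw [hφdef]; positivity
      have : (0:ℝ) ≤ φ y * (g c y) ^ 2 := mul_nonneg hφnn (sq_nonneg _)
      simpa using this
    have hii : IntervalIntegrable (fun y => φ y * (g c y) ^ 2) volume 0 h :=
      (hφc.mul ((hgcont c).pow 2)).intervalIntegrable 0 h
    have hae := (intervalIntegral.integral_eq_zero_iff_of_le_of_nonneg_ae hh.le hwnn hii).mp hzero
    have hae' : (fun y => φ y * (g c y) ^ 2) =ᵐ[volume.restrict (Ioo 0 h)] 0 :=
      ae_restrict_of_ae_restrict_of_subset Ioo_subset_Ioc_self hae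
    have heq : EqOn (fun y => φ y * (g c y) ^ 2) 0 (Ioo 0 h) :=
      Measure.eqOn_open_of_ae_eq hae' isOpen_Ioo
        (hφc.mul ((hgcont c).pow 2)).continuousOn continuousOn_const
    have hg0 : ∀ y ∈ Ioo (0:ℝ) h, (∑ i : Fin M × Fin 3,
        c i * (y ^ (i.2 : ℕ) * Real.exp (-(((i.1 : ℕ) : ℝ) + 1) * y))) = 0 := by
      intro y hy
      have hz := heq hy
      simp only [Pi.zero_apply] at hz
      have hφpos : 0 < φ y := by
        rw [hφdef]
        have : 0 < y * (h - y) := mul_pos hy.1 (sub_pos.mpr hy.2)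
        positivity
      have hsq : (g c y) ^ 2 = 0 := by
        rcases mul_eq_zero.mp hz with h' | h'
        · exact absurd h' (ne_of_gt hφpos)
        · exact h'
      have : g c y = 0 := by
        exact pow_eq_zero_iff (by norm_num) |>.mp hsq
      exact this
    exact indep h hh M c hg0
  have hinj : Function.Injective B.mulVecLin := by
    rw [← LinearMap.ker_eq_bot]
    rw [LinearMap.ker_eq_bot']
    intro c hcz
    exact hc0 c hcz
  have hsurj : Function.Surjective B.mulVecLin :=
    LinearMap.injective_iff_surjective.mp hinj
  obtain ⟨c, hc⟩ := hsurj (fun i => a i.1 i.2)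
  have hg2 : ContDiff ℝ 2 (g c) := by
    refine ContDiff.sum fun i _ => ?_
    refine contDiff_const.mul ?_
    exact (contDiff_id.pow _).mul (ContDiff.exp (contDiff_const.mul contDiff_id))
  have hφ2 : ContDiff ℝ 2 φ := (contDiff_id.mul (contDiff_const.sub contDiff_id)).pow 2
  have hderiv : ∀ y : ℝ, HasDerivAt (fun y => φ y * g c y)
      ((2 * (y * (h - y)) ^ 1 * (1 * (h - y) + y * (0 - 1))) * g c y
        + (y * (h - y)) ^ 2 * deriv (g c) y) y := by
    intro y
    have h1 : HasDerivAt (fun y : ℝ => y * (h - y)) (1 * (h - y) + y * (0 - 1)) y :=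
      (hasDerivAt_id y).mul ((hasDerivAt_const y h).sub (hasDerivAt_id y))
    have h2 := h1.pow 2
    have h3 : HasDerivAt (g c) (deriv (g c) y) y :=
      ((hg2.differentiable (by norm_num)).differentiableAt).hasDerivAt
    exact h2.mul h3
  refine ⟨fun y => φ y * g c y, hφ2.mul hg2, ?_, ?_, ?_, ?_, ?_⟩
  · show φ 0 * g c 0 = 0
    rw [hφdef]; norm_num
  · show φ h * g c h = 0
    rw [hφdef]; norm_num
  · rw [(hderiv 0).deriv]
    norm_num
  · rw [(hderiv h).deriv]
    norm_num
  · intro m p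
    have h1 : B.mulVec c (m, p) = a m p := by
      have := congrFun hc (m, p)
      simpa [Matrix.mulVecLin_apply] using this
    have h2 := hmul c (m, p)
    rw [h2] at h1
    exact h1


end MomentAux

/-- Surjectivity of the moment map: for any targets a_{m,p} there is a C²
function W on [0,h] vanishing with its derivative at both endpoints whose
moments ∫_0^h y^p e^{-my} W(y) dy equal the a_{m,p}. -/
theorem moment_map_surjective (h : ℝ) (hh : 0 < h) (M : ℕ) (hM : 0 < M)
    (a : Fin M → Fin 3 → ℝ) :
    ∃ W : ℝ → ℝ, ContDiff ℝ 2 W ∧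
      W 0 = 0 ∧ W h = 0 ∧ deriv W 0 = 0 ∧ deriv W h = 0 ∧
      ∀ m : Fin M, ∀ p : Fin 3,
        (∫ y in (0:ℝ)..h, y ^ (p : ℕ) * Real.exp (-((m : ℕ) + 1) * y) * W y)
          = a m p := by
  exact MomentAux.main_aux h hh M hM a
end

section
/- Let Q : ℝⁿ → ℝⁿ be a C¹ vector field on the closed unit ball B̄ⁿ with sup norm of its derivative strictly less than 1, and suppose Q(q)·q < 0 for all q with |q| = 1. Then for every initial condition q₀ ∈ B̄ⁿ, the solution of dq/dt = Q(q) exists for all t ≥ 0 and remains in B̄ⁿ, i.e., the ODE defines a global semiflow on the closed unit ball. -/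
open Set
open scoped RealInnerProductSpace

section Helpers
variable {E : Type*} [NormedAddCommGroup E] [InnerProductSpace ℝ E]

noncomputable def ballProj (x : E) : E := if ‖x‖ ≤ 1 then x else ‖x‖⁻¹ • x

lemma ballProj_of_le {x : E} (h : ‖x‖ ≤ 1) : ballProj x = x := if_pos h

lemma norm_ballProj_le (x : E) : ‖ballProj x‖ ≤ 1 := by
  unfold ballProj; split_ifs with h
  · exact h
  · push_neg at h
    rw [norm_smul, norm_inv, norm_norm, inv_mul_cancel₀ (by linarith)]

lemma ballProj_aux {x y : E} (hx : ‖x‖ ≤ 1) (hy : 1 < ‖y‖) :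
    ‖x - ‖y‖⁻¹ • y‖ ≤ 2 * ‖x - y‖ := by
  have hy0 : (0:ℝ) < ‖y‖ := by linarith
  have h1 : ‖y - ‖y‖⁻¹ • y‖ = ‖y‖ - 1 := by
    have : y - ‖y‖⁻¹ • y = (1 - ‖y‖⁻¹) • y := by
      rw [sub_smul, one_smul]
    rw [this, norm_smul, Real.norm_eq_abs, abs_of_nonneg, sub_mul, one_mul,
      inv_mul_cancel₀ hy0.ne']
    have : ‖y‖⁻¹ ≤ 1 := by
      rw [inv_le_one_iff₀]; right; linarith
    linarith
  have h2 : ‖y‖ - ‖x‖ ≤ ‖x - y‖ := by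
    have := abs_norm_sub_norm_le x y
    rw [abs_le] at this; linarith [this.1]
  calc ‖x - ‖y‖⁻¹ • y‖ ≤ ‖x - y‖ + ‖y - ‖y‖⁻¹ • y‖ := by
        simpa using norm_sub_le_norm_sub_add_norm_sub x y (‖y‖⁻¹ • y)
    _ ≤ ‖x - y‖ + ‖x - y‖ := by
        rw [h1]; linarith
    _ = 2 * ‖x - y‖ := by ring

lemma lipschitzWith_ballProj : LipschitzWith 2 (ballProj : E → E) := by
  apply LipschitzWith.of_dist_le_mul
  intro x y
  simp only [dist_eq_norm]
  unfold ballProj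
  push_cast
  split_ifs with hx hy hy
  · nlinarith [norm_nonneg (x - y)]
  · push_neg at hy; exact ballProj_aux hx hy
  · push_neg at hx
    rw [norm_sub_rev, norm_sub_rev x y]
    exact ballProj_aux hy hx
  · push_neg at hx hy
    have hx0 : (0:ℝ) < ‖x‖ := by linarith
    have hy0 : (0:ℝ) < ‖y‖ := by linarith
    have h2 : |‖y‖ - ‖x‖| ≤ ‖x - y‖ := by
      rw [abs_sub_comm]; exact abs_norm_sub_norm_le x y
    have key : ‖‖x‖⁻¹ • x - ‖y‖⁻¹ • y‖ ≤ ‖‖x‖⁻¹ • (x - y)‖ + ‖(‖x‖⁻¹ - ‖y‖⁻¹) • y‖ := by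
      have : ‖x‖⁻¹ • x - ‖y‖⁻¹ • y = ‖x‖⁻¹ • (x - y) + (‖x‖⁻¹ - ‖y‖⁻¹) • y := by
        rw [smul_sub, sub_smul]; abel
      rw [this]; exact norm_add_le _ _
    have e1 : ‖‖x‖⁻¹ • (x - y)‖ ≤ ‖x - y‖ := by
      rw [norm_smul, Real.norm_eq_abs, abs_of_pos (inv_pos.2 hx0)]
      nlinarith [norm_nonneg (x - y), inv_le_one_of_one_le₀ hx.le]
    have e2 : ‖(‖x‖⁻¹ - ‖y‖⁻¹) • y‖ ≤ ‖x - y‖ := by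
      rw [norm_smul, Real.norm_eq_abs]
      have : |‖x‖⁻¹ - ‖y‖⁻¹| = |‖y‖ - ‖x‖| / (‖x‖ * ‖y‖) := by
        rw [inv_sub_inv hx0.ne' hy0.ne', abs_div,
          show |‖x‖ * ‖y‖| = ‖x‖ * ‖y‖ from abs_of_pos (by positivity)]
      rw [this]
      rw [div_mul_eq_mul_div, div_le_iff₀ (by positivity)]
      calc |‖y‖ - ‖x‖| * ‖y‖ ≤ ‖x - y‖ * ‖y‖ := by
            nlinarith [abs_nonneg (‖y‖ - ‖x‖)]
        _ ≤ ‖x - y‖ * (‖x‖ * ‖y‖) := by nlinarith [mul_nonneg (mul_nonneg (norm_nonneg (x - y)) hy0.le) (show (0:ℝ) ≤ ‖x‖ - 1 by linarith)]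
    linarith


lemma ball_invariance {g : ℝ → E} {V : E → E} {b : ℝ}
    (hg : ∀ u ∈ Icc (0:ℝ) b, HasDerivAt g (V (g u)) u)
    (hV : ∀ x : E, 1 < ‖x‖ → ⟪V x, x⟫ < 0)
    (h0 : ‖g 0‖ ≤ 1) {t : ℝ} (ht : t ∈ Icc (0:ℝ) b) : ‖g t‖ ≤ 1 := by
  by_contra hyp
  push_neg at hyp
  have ht0 : 0 < t := by
    rcases ht.1.lt_or_eq with h | h
    · exact h
    · exfalso; rw [← h] at hyp; linarith
  set S : Set ℝ := {u | u ∈ Icc 0 t ∧ ‖g u‖ ≤ 1} with hS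
  have h0S : (0:ℝ) ∈ S := ⟨⟨le_refl _, ht0.le⟩, h0⟩
  have hbdd : BddAbove S := ⟨t, fun u hu => hu.1.2⟩
  set s := sSup S with hs
  have hsmem : s ∈ Icc (0:ℝ) t :=
    ⟨le_csSup hbdd h0S, csSup_le ⟨0, h0S⟩ fun u hu => hu.1.2⟩
  have hsub : Icc (0:ℝ) t ⊆ Icc (0:ℝ) b := Icc_subset_Icc le_rfl ht.2
  have hgs : ‖g s‖ ≤ 1 := by
    have hcl : s ∈ closure S := csSup_mem_closure ⟨0, h0S⟩ hbdd
    have hcont : ContinuousWithinAt (fun u => ‖g u‖) S s :=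
      ((hg s (hsub hsmem)).continuousAt.norm).continuousWithinAt
    have hne : (nhdsWithin s S).NeBot := mem_closure_iff_nhdsWithin_neBot.mp hcl
    exact le_of_tendsto hcont (Filter.eventually_inf_principal.mpr
      (Filter.Eventually.of_forall fun u hu => hu.2))
  have hst : s < t := by
    rcases hsmem.2.lt_or_eq with h | h
    · exact h
    · exfalso; rw [h] at hgs; linarith
  have hout : ∀ u ∈ Ioc s t, 1 < ‖g u‖ := by
    intro u hu
    by_contra hle
    push_neg at hle
    have : u ∈ S := ⟨⟨hsmem.1.trans hu.1.le, hu.2⟩, hle⟩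
    exact absurd (le_csSup hbdd this) (not_le.mpr hu.1)
  set φ : ℝ → ℝ := fun u => ⟪g u, g u⟫ with hφ
  have hφd : ∀ u ∈ Ioo s t, HasDerivAt φ (2 * ⟪V (g u), g u⟫) u := by
    intro u hu
    have hd := hg u (hsub ⟨hsmem.1.trans hu.1.le, hu.2.le⟩)
    have := hd.inner ℝ hd
    refine this.congr_deriv ?_
    rw [real_inner_comm]; ring
  have hanti : StrictAntiOn φ (Icc s t) := by
    apply strictAntiOn_of_deriv_neg (convex_Icc s t)
    · intro u hu
      exact ((hg u (hsub (Icc_subset_Icc hsmem.1 le_rfl hu))).continuousAt.inner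
        (hg u (hsub (Icc_subset_Icc hsmem.1 le_rfl hu))).continuousAt).continuousWithinAt
    · intro u hu
      rw [interior_Icc] at hu
      rw [(hφd u hu).deriv]
      have := hV (g u) (hout u (Ioo_subset_Ioc_self hu))
      linarith
  have h1 : φ t < φ s := hanti (left_mem_Icc.mpr hst.le) (right_mem_Icc.mpr hst.le) hst
  have e1 : φ s ≤ 1 := by
    rw [hφ]; simp only [real_inner_self_eq_norm_sq]; nlinarith [norm_nonneg (g s)]
  have e2 : 1 < φ t := by
    rw [hφ]; simp only [real_inner_self_eq_norm_sq]; nlinarith [norm_nonneg (g t)]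
  linarith

theorem global_semiflow_aux [CompleteSpace E]
    (Q : E → E)
    (hQ : ContDiff ℝ 1 Q)
    (hgrad : ∀ q, ‖q‖ ≤ 1 → ‖fderiv ℝ Q q‖ < 1)
    (hinward : ∀ q, ‖q‖ = 1 → (inner ℝ (Q q) q : ℝ) < 0) :
    ∀ q₀ : E, ‖q₀‖ ≤ 1 →
      ∃ q : ℝ → E, q 0 = q₀ ∧
        ∀ t : ℝ, 0 ≤ t → HasDerivAt q (Q (q t)) t ∧ ‖q t‖ ≤ 1 := by
  intro q₀ hq₀
  set V : E → E := fun x => Q (ballProj x) with hVdef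
  -- V is globally Lipschitz with constant 2
  have hQlip : LipschitzOnWith 1 Q (Metric.closedBall (0:E) 1) := by
    refine Convex.lipschitzOnWith_of_nnnorm_fderiv_le
      (fun x _ => (hQ.differentiable one_ne_zero).differentiableAt)
      (fun x hx => ?_) (convex_closedBall _ _)
    have := hgrad x (by simpa [Metric.mem_closedBall, dist_zero_right] using hx)
    exact_mod_cast this.le
  have hPmem : ∀ x : E, ballProj x ∈ Metric.closedBall (0:E) 1 := fun x => by
    simpa [Metric.mem_closedBall, dist_zero_right] using norm_ballProj_le x
  have hVlip : LipschitzWith 2 V := by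
    apply LipschitzWith.of_dist_le_mul
    intro x y
    calc dist (V x) (V y) ≤ 1 * dist (ballProj x) (ballProj y) := by
          simpa using hQlip.dist_le_mul _ (hPmem x) _ (hPmem y)
      _ ≤ 2 * dist x y := by
          simpa using lipschitzWith_ballProj.dist_le_mul x y
  -- V is globally bounded
  set C' : ℝ := ‖Q (0:E)‖ + 1 with hC'def
  have hC'0 : 0 ≤ C' := by positivity
  have hVbd : ∀ x : E, ‖V x‖ ≤ C' := by
    intro x
    have h0mem : (0:E) ∈ Metric.closedBall (0:E) 1 := by simp
    have h := hQlip.dist_le_mul _ (hPmem x) _ h0mem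
    have h2 : dist (ballProj x) (0:E) ≤ 1 := by
      simpa [dist_zero_right] using norm_ballProj_le x
    calc ‖V x‖ ≤ ‖V x - Q 0‖ + ‖Q 0‖ := by
          simpa using norm_add_le (V x - Q 0) (Q 0)
      _ ≤ 1 + ‖Q 0‖ := by
          have : ‖V x - Q 0‖ = dist (Q (ballProj x)) (Q 0) := by
            rw [dist_eq_norm]
          rw [this]; push_cast at h; nlinarith
      _ = C' := by rw [hC'def]; ring
  -- solutions on [-(m+1), m+1]
  have hsol : ∀ m : ℕ, ∃ f : ℝ → E, f 0 = q₀ ∧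
      ∀ t ∈ Icc (-(m+1:ℝ)) (m+1), HasDerivWithinAt f (V (f t)) (Icc (-(m+1:ℝ)) (m+1)) t := by
    intro m
    have hpl : IsPicardLindelof (fun _ => V) (tmin := -(m+1:ℝ)) (tmax := m+1)
        ⟨0, by constructor <;> [linarith [Nat.cast_nonneg (α := ℝ) m];
          linarith [Nat.cast_nonneg (α := ℝ) m]]⟩ q₀
        (Real.toNNReal (C' * (m+1))) 0 (Real.toNNReal C') 2 :=
      IsPicardLindelof.of_time_independent
        (fun x _ => by rw [Real.coe_toNNReal _ hC'0]; exact hVbd x)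
        hVlip.lipschitzOnWith
        (by
          rw [Real.coe_toNNReal _ hC'0, Real.coe_toNNReal _ (mul_nonneg hC'0 (by positivity))]
          norm_num)
    exact hpl.exists_eq_forall_mem_Icc_hasDerivWithinAt₀
  choose f hf0 hfd using hsol
  have hfD : ∀ (m : ℕ), ∀ t ∈ Ioo (-(m+1:ℝ)) (m+1), HasDerivAt (f m) (V (f m t)) t :=
    fun m t ht => (hfd m t (Ioo_subset_Icc_self ht)).hasDerivAt (Icc_mem_nhds ht.1 ht.2)
  have hfC : ∀ (m : ℕ), ContinuousOn (f m) (Icc (-(m+1:ℝ)) (m+1)) :=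
    fun m t ht => (hfd m t ht).continuousWithinAt
  -- uniqueness / gluing
  have hEq : ∀ (k m : ℕ), k ≤ m → EqOn (f k) (f m) (Icc (-(k+1:ℝ)) (k+1)) := by
    intro k m hkm
    have hsub : Icc (-(k+1:ℝ)) (k+1) ⊆ Icc (-(m+1:ℝ)) (m+1) := by
      apply Icc_subset_Icc <;>
        [simp; skip] <;> push_cast <;> [skip; skip] <;>
        · have : (k:ℝ) ≤ m := Nat.cast_le.mpr hkm
          linarith
    have hsub2 : Ioo (-(k+1:ℝ)) (k+1) ⊆ Ioo (-(m+1:ℝ)) (m+1) := by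
      apply Ioo_subset_Ioo <;>
        · have : (k:ℝ) ≤ m := Nat.cast_le.mpr hkm
          push_cast; linarith
    have h0mem : (0:ℝ) ∈ Ioo (-(k+1:ℝ)) (k+1) := by
      constructor <;> [linarith [Nat.cast_nonneg (α := ℝ) k];
        linarith [Nat.cast_nonneg (α := ℝ) k]]
    exact ODE_solution_unique_of_mem_Icc (v := fun _ => V) (s := fun _ => univ) (K := 2)
      (fun _ _ => hVlip.lipschitzOnWith) h0mem
      (hfC k)
      (fun t ht => hfD k t ht)
      (fun _ _ => mem_univ _)
      ((hfC m).mono hsub)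
      (fun t ht => hfD m t (hsub2 ht))
      (fun _ _ => mem_univ _)
      (by rw [hf0 k, hf0 m])
  set q : ℝ → E := fun t => f ⌊t⌋₊ t with hqdef
  have hq0 : q 0 = q₀ := by simp only [hqdef, Nat.floor_zero]; exact hf0 0
  -- q agrees with f M near any point
  have hq_eq : ∀ (M : ℕ) (s : ℝ), -1 < s → s < M + 1 → q s = f M s := by
    intro M s hs1 hs2
    set k := ⌊s⌋₊ with hk
    have hkM : k ≤ M := by
      rcases le_or_gt 0 s with h | h
      · have : ⌊s⌋₊ < M + 1 := (Nat.floor_lt h).mpr (by push_cast; linarith)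
        omega
      · have : ⌊s⌋₊ = 0 := Nat.floor_of_nonpos h.le
        omega
    have hmem : s ∈ Icc (-(k+1:ℝ)) (k+1) := by
      constructor
      · have : (0:ℝ) ≤ k := Nat.cast_nonneg k
        linarith
      · exact (Nat.lt_floor_add_one s).le
    exact hEq k M hkM hmem
  have hqD : ∀ t : ℝ, 0 ≤ t → HasDerivAt q (V (q t)) t := by
    intro t ht
    set M := ⌊t⌋₊ + 1 with hM
    have htM : t < M + 1 := by
      have := Nat.lt_floor_add_one t
      push_cast [hM]; push_cast at this; linarith
    have hmem : t ∈ Ioo (-1 : ℝ) ((M:ℝ) + 1) := ⟨by linarith, htM⟩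
    have hev : q =ᶠ[nhds t] f M :=
      Filter.eventuallyEq_of_mem (Ioo_mem_nhds hmem.1 hmem.2)
        (fun s hs => hq_eq M s hs.1 hs.2)
    have hder : HasDerivAt (f M) (V (f M t)) t := by
      apply hfD M t
      constructor
      · have : (0:ℝ) ≤ M := Nat.cast_nonneg M
        linarith
      · linarith
    have h7 := hder.congr_of_eventuallyEq hev
    rw [hq_eq M t (by linarith) htM]
    exact h7
  -- invariance
  have hVin : ∀ x : E, 1 < ‖x‖ → ⟪V x, x⟫ < 0 := by
    intro x hx
    have hx0 : (0:ℝ) < ‖x‖ := by linarith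
    have hP : ballProj x = ‖x‖⁻¹ • x := if_neg (not_le.mpr hx)
    have hPn : ‖ballProj x‖ = 1 := by
      rw [hP, norm_smul, norm_inv, norm_norm, inv_mul_cancel₀ hx0.ne']
    have hxP : x = ‖x‖ • ballProj x := by
      rw [hP, smul_smul, mul_inv_cancel₀ hx0.ne', one_smul]
    have h6 : (⟪V x, x⟫ : ℝ) = ⟪Q (ballProj x), x⟫ := rfl
    rw [h6]
    nth_rewrite 2 [hxP]
    rw [real_inner_smul_right]
    exact mul_neg_of_pos_of_neg hx0 (hinward _ hPn)
  have hqB : ∀ t : ℝ, 0 ≤ t → ‖q t‖ ≤ 1 := by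
    intro t ht
    exact ball_invariance (b := t) (fun u hu => hqD u hu.1) hVin
      (by rw [hq0]; exact hq₀) (right_mem_Icc.mpr ht)
  refine ⟨q, hq0, fun t ht => ⟨?_, hqB t ht⟩⟩
  have := hqD t ht
  rwa [show V (q t) = Q (q t) by
    simp only [hVdef]; rw [ballProj_of_le (hqB t ht)]] at this
end Helpers

/-- A C¹ vector field on ℝⁿ whose derivative is bounded by 1 in norm on the
closed unit ball and which points strictly inward on the unit sphere generates
a global semiflow on the closed unit ball: every solution starting in the ball
exists for all t ≥ 0 and stays in the ball. -/
theorem global_semiflow_on_ball (n : ℕ)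
    (Q : EuclideanSpace ℝ (Fin n) → EuclideanSpace ℝ (Fin n))
    (hQ : ContDiff ℝ 1 Q)
    (hgrad : ∀ q, ‖q‖ ≤ 1 → ‖fderiv ℝ Q q‖ < 1)
    (hinward : ∀ q, ‖q‖ = 1 → (inner ℝ (Q q) q : ℝ) < 0) :
    ∀ q₀ : EuclideanSpace ℝ (Fin n), ‖q₀‖ ≤ 1 →
      ∃ q : ℝ → EuclideanSpace ℝ (Fin n), q 0 = q₀ ∧
        ∀ t : ℝ, 0 ≤ t → HasDerivAt q (Q (q t)) t ∧ ‖q t‖ ≤ 1 :=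
  global_semiflow_aux Q hQ hgrad hinward
end
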